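/- Let d ≥ 1, let u be a radial real-valued Schwartz function on ℝ^d (u(x) = u(y) whenever ‖x‖ = ‖y‖) whose Fourier transform 𝓕u vanishes outside the closed unit ball, let m ≥ 1 be an integer, and let h := Δ^m u. Then there exists a constant C ∈ [0, ∞) such that for every ξ ∈ ℝ^d with ξ ≠ 0, the integral ∫₀^∞ |𝓕h(tξ)|² dt/t is finite and equal to C. Moreover, if 𝓕u(ξ₀) ≠ 0 for some ξ₀ ≠ 0, then C > 0. -/

import Mathlib

open MeasureTheory
open scoped FourierTransform

/-- The Laplacian of a function on `ℝ^d`, as the sum of its second partial derivatives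
along the standard coordinate directions. -/
noncomputable def laplacian {d : ℕ} (F : EuclideanSpace ℝ (Fin d) → ℝ)
    (x : EuclideanSpace ℝ (Fin d)) : ℝ :=
  ∑ i : Fin d,
    fderiv ℝ (fun y => fderiv ℝ F y (EuclideanSpace.single i 1)) x
      (EuclideanSpace.single i 1)

open SchwartzMap Real Complex
open scoped RealInnerProductSpace

variable {d : ℕ}

local notation "𝔼" => EuclideanSpace ℝ (Fin d)

/-- Complexification of a real Schwartz function. -/
noncomputable def cplx : 𝓢(𝔼, ℝ) →L[ℝ] 𝓢(𝔼, ℂ) :=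
  SchwartzMap.bilinLeftCLM ((ContinuousLinearMap.mul ℝ ℂ).comp Complex.ofRealCLM)
    (Function.HasTemperateGrowth.const (1 : ℂ))

lemma cplx_apply (f : 𝓢(𝔼, ℝ)) (x : 𝔼) : cplx f x = (f x : ℂ) := mul_one _

/-- The partial derivative in direction `m` on Schwartz space. -/
noncomputable def pderivCLM (𝕜 : Type*) [RCLike 𝕜] {F : Type*}
    [NormedAddCommGroup F] [NormedSpace ℝ F] [NormedSpace 𝕜 F] [SMulCommClass ℝ 𝕜 F] (m : 𝔼) :
    𝓢(𝔼, F) →L[𝕜] 𝓢(𝔼, F) :=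
  LineDeriv.lineDerivOpCLM 𝕜 𝓢(𝔼, F) m

lemma pderivCLM_apply (𝕜 : Type*) [RCLike 𝕜] {F : Type*}
    [NormedAddCommGroup F] [NormedSpace ℝ F] [NormedSpace 𝕜 F] [SMulCommClass ℝ 𝕜 F] (m : 𝔼)
    (f : 𝓢(𝔼, F)) (x : 𝔼) : pderivCLM 𝕜 m f x = fderiv ℝ f x m := rfl

lemma fourier_pderiv (f : 𝓢(𝔼, ℂ)) (e ξ : 𝔼) :
    𝓕 (⇑(pderivCLM ℝ e f)) ξ = (2 * π * Complex.I * (⟪ξ, e⟫ : ℝ)) • 𝓕 (⇑f) ξ := by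
  have hder : fderiv ℝ ⇑f = ⇑(fderivCLM ℝ 𝔼 ℂ f) := funext fun x => (fderivCLM_apply ℝ f x).symm
  have hint : Integrable (fderiv ℝ ⇑f) := by rw [hder]; exact (fderivCLM ℝ 𝔼 ℂ f).integrable
  have h1 : ⇑(pderivCLM ℝ e f) = fun x => fderiv ℝ ⇑f x e :=
    funext fun x => pderivCLM_apply ℝ e f x
  rw [h1]
  calc 𝓕 (fun x => fderiv ℝ ⇑f x e) ξ
      = 𝓕 (fderiv ℝ ⇑f) ξ e := (Real.fourier_continuousLinearMap_apply hint).symm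
    _ = VectorFourier.fourierSMulRight (-innerSL ℝ) (𝓕 ⇑f) ξ e := by
        rw [Real.fourier_fderiv f.integrable f.differentiable hint]
    _ = (2 * π * Complex.I * (⟪ξ, e⟫ : ℝ)) • 𝓕 (⇑f) ξ := by
        simp [VectorFourier.fourierSMulRight_apply, smul_smul, real_smul]
        ring_nf
        rw [show (innerSL ℝ ξ e : ℝ) = ⟪ξ, e⟫ from rfl]; ring

/-- The Laplacian as an operator on Schwartz space. -/
noncomputable def lapS {F : Type*} [NormedAddCommGroup F] [NormedSpace ℝ F] :
    𝓢(𝔼, F) →L[ℝ] 𝓢(𝔼, F) :=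
  ∑ i : Fin d, (pderivCLM ℝ (EuclideanSpace.single i 1)).comp
    (pderivCLM ℝ (EuclideanSpace.single i 1))

lemma schwartz_sum_apply {F : Type*} [NormedAddCommGroup F] [NormedSpace ℝ F]
    {ι : Type*} (s : Finset ι) (g : ι → 𝓢(𝔼, F)) (x : 𝔼) :
    (∑ i ∈ s, g i) x = ∑ i ∈ s, g i x := by
  exact (congrFun (map_sum (FunLike.coeAddMonoidHom 𝓢(𝔼, F) 𝔼 F) g s) x).trans (by rw [Finset.sum_apply]; rfl)

lemma lapS_coe (f : 𝓢(𝔼, ℝ)) : ⇑(lapS f) = laplacian ⇑f := by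
  funext x
  simp only [lapS, ContinuousLinearMap.sum_apply, ContinuousLinearMap.comp_apply,
    schwartz_sum_apply, laplacian]
  refine Finset.sum_congr rfl fun i _ => ?_
  rfl

lemma cplx_pderiv (e : 𝔼) (f : 𝓢(𝔼, ℝ)) :
    pderivCLM ℝ e (cplx f) = cplx (pderivCLM ℝ e f) := by
  ext x
  rw [pderivCLM_apply, cplx_apply, pderivCLM_apply]
  have hc : ⇑(cplx f) = ⇑Complex.ofRealCLM ∘ ⇑f := funext fun y => cplx_apply f y
  rw [hc, (Complex.ofRealCLM.hasFDerivAt.comp x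
    (f.differentiable x).hasFDerivAt).fderiv]
  rfl

lemma cplx_lapS (f : 𝓢(𝔼, ℝ)) : cplx (lapS f) = lapS (cplx f) := by
  simp only [lapS, ContinuousLinearMap.sum_apply, ContinuousLinearMap.comp_apply, map_sum]
  exact Finset.sum_congr rfl fun i _ => by rw [cplx_pderiv, cplx_pderiv]

lemma fourier_lapS (f : 𝓢(𝔼, ℂ)) (ξ : 𝔼) :
    𝓕 (⇑(lapS f)) ξ = ((-(4 * π ^ 2 * ‖ξ‖ ^ 2) : ℝ) : ℂ) • 𝓕 (⇑f) ξ := by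
  have hsum : ⇑(lapS f) = ⇑(∑ i : Fin d, pderivCLM ℝ (EuclideanSpace.single i 1)
      (pderivCLM ℝ (EuclideanSpace.single i 1) f)) := by
    simp [lapS, ContinuousLinearMap.sum_apply]
  have hFT : ∀ g : 𝓢(𝔼, ℂ), 𝓕 ⇑g = ⇑(fourierTransformCLM ℝ g) := fun g => rfl
  rw [hsum, hFT, map_sum]
  rw [schwartz_sum_apply]
  have hterm : ∀ i : Fin d,
      (fourierTransformCLM ℝ (pderivCLM ℝ (EuclideanSpace.single i 1)
        (pderivCLM ℝ (EuclideanSpace.single i 1) f))) ξ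
      = ((2 * π * Complex.I * (ξ i)) ^ 2) • 𝓕 (⇑f) ξ := by
    intro i
    have h1 := fourier_pderiv (pderivCLM ℝ (EuclideanSpace.single i 1) f)
      (EuclideanSpace.single i 1) ξ
    have h2 := fourier_pderiv f (EuclideanSpace.single i 1) ξ
    have hin : (⟪ξ, EuclideanSpace.single i 1⟫ : ℝ) = ξ i := by
      simp [EuclideanSpace.inner_single_right]
    rw [← hFT, h1, h2, hin, smul_smul]
    ring_nf
  rw [Finset.sum_congr rfl fun i _ => hterm i, ← Finset.sum_smul]
  congr 1
  have hnorm : (‖ξ‖ : ℝ) ^ 2 = ∑ i : Fin d, (ξ i) ^ 2 := by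
    rw [EuclideanSpace.norm_eq, Real.sq_sqrt (by positivity)]
    exact Finset.sum_congr rfl fun i _ => by exact sq_abs _
  calc (∑ i : Fin d, (2 * (π:ℂ) * Complex.I * (ξ i : ℂ)) ^ 2)
      = ∑ i : Fin d, (-(4 * (π:ℂ) ^ 2) * ((ξ i : ℂ)) ^ 2) := Finset.sum_congr rfl fun i _ => by
        rw [mul_pow, mul_pow, mul_pow, Complex.I_sq]; ring
    _ = -(4 * (π:ℂ) ^ 2) * ∑ i : Fin d, ((ξ i : ℂ))^2 := by rw [Finset.mul_sum]
    _ = ((-(4 * π ^ 2 * ‖ξ‖ ^ 2) : ℝ) : ℂ) := by push_cast [hnorm]; ring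

lemma cplx_lapS_iter (m : ℕ) (f : 𝓢(𝔼, ℝ)) :
    cplx (lapS^[m] f) = lapS^[m] (cplx f) := by
  induction m with
  | zero => rfl
  | succ n ih =>
    rw [Function.iterate_succ_apply', Function.iterate_succ_apply', cplx_lapS, ih]

lemma lapS_iter_coe (m : ℕ) (f : 𝓢(𝔼, ℝ)) :
    ⇑(lapS^[m] f) = laplacian^[m] ⇑f := by
  induction m with
  | zero => rfl
  | succ n ih =>
    rw [Function.iterate_succ_apply', Function.iterate_succ_apply', lapS_coe, ih]

lemma fourier_lapS_iter (m : ℕ) (f : 𝓢(𝔼, ℂ)) (ξ : 𝔼) :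
    𝓕 (⇑(lapS^[m] f)) ξ = (((-(4 * π ^ 2 * ‖ξ‖ ^ 2) : ℝ) : ℂ)) ^ m • 𝓕 (⇑f) ξ := by
  induction m with
  | zero => simp
  | succ n ih =>
    rw [Function.iterate_succ_apply', fourier_lapS, ih, smul_smul, pow_succ]
    ring_nf

lemma fourier_radial (v : 𝓢(𝔼, ℂ)) (hrad : ∀ x y : 𝔼, ‖x‖ = ‖y‖ → v x = v y) :
    ∀ x y : 𝔼, ‖x‖ = ‖y‖ → 𝓕 (⇑v) x = 𝓕 (⇑v) y := by
  intro x y hxy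
  set A := Submodule.reflection (ℝ ∙ (x - y))ᗮ with hA
  have hAx : A x = y := Submodule.reflection_sub hxy
  have hcomp : ⇑v ∘ ⇑A = ⇑v := funext fun z => hrad (A z) z (A.norm_map z)
  calc 𝓕 (⇑v) x = 𝓕 (⇑v ∘ ⇑A) x := by rw [hcomp]
    _ = 𝓕 (⇑v) (A x) := Real.fourier_comp_linearIsometry A ⇑v x
    _ = 𝓕 (⇑v) y := by rw [hAx]

/-- The finiteness-and-constancy claim inside the proof of Lemma 1 of the paper's appendix:
if `u` is a radial real Schwartz function on `ℝ^d` whose Fourier transform vanishes outside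
the closed unit ball and `h = Δ^m u`, then the Calderón integral `∫₀^∞ |𝓕h(tξ)|² dt/t` is
finite and takes the same value `C ≥ 0` for every `ξ ≠ 0`; moreover `C > 0` whenever
`𝓕u(ξ₀) ≠ 0` for some `ξ₀ ≠ 0`. -/
theorem calderon_integral_constant
    (d : ℕ) (hd : 1 ≤ d)
    (u : SchwartzMap (EuclideanSpace ℝ (Fin d)) ℝ)
    (hradial : ∀ x y : EuclideanSpace ℝ (Fin d), ‖x‖ = ‖y‖ → u x = u y)
    (hsupp : ∀ ξ : EuclideanSpace ℝ (Fin d), 1 ≤ ‖ξ‖ →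
      𝓕 (fun x => (u x : ℂ)) ξ = 0)
    (m : ℕ) (hm : 1 ≤ m)
    (h : EuclideanSpace ℝ (Fin d) → ℝ) (hh : h = laplacian^[m] ⇑u) :
    ∃ C : ℝ, 0 ≤ C ∧
      (∀ ξ : EuclideanSpace ℝ (Fin d), ξ ≠ 0 →
        IntegrableOn (fun t => ‖𝓕 (fun x => (h x : ℂ)) (t • ξ)‖ ^ 2 / t)
          (Set.Ioi (0 : ℝ)) volume ∧
        ∫ t in Set.Ioi (0 : ℝ), ‖𝓕 (fun x => (h x : ℂ)) (t • ξ)‖ ^ 2 / t = C) ∧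
      ((∃ ξ₀ : EuclideanSpace ℝ (Fin d), ξ₀ ≠ 0 ∧ 𝓕 (fun x => (u x : ℂ)) ξ₀ ≠ 0) →
        0 < C) := by
  subst hh
  set v := cplx u with hv_def
  have hv : ⇑v = fun x => (u x : ℂ) := funext fun x => cplx_apply u x
  set w := lapS^[m] v with hw_def
  have hhc : (fun x => (((laplacian^[m] ⇑u) x : ℝ) : ℂ)) = ⇑w := by
    rw [← lapS_iter_coe m u]
    funext x
    rw [← cplx_apply (lapS^[m] u) x, cplx_lapS_iter]
  set G := 𝓕 (fun x => (u x : ℂ)) with hG_def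
  set F := 𝓕 ⇑w with hF_def
  have hGv : G = 𝓕 ⇑v := by rw [hv]
  have key : ∀ ξ : EuclideanSpace ℝ (Fin d), F ξ
      = (((-(4 * π ^ 2 * ‖ξ‖ ^ 2) : ℝ) : ℂ)) ^ m • G ξ := by
    intro ξ
    rw [hF_def, hw_def, fourier_lapS_iter, hGv]
  have hvrad : ∀ x y : EuclideanSpace ℝ (Fin d), ‖x‖ = ‖y‖ → v x = v y := by
    intro x y hxy
    rw [hv_def, cplx_apply, cplx_apply, hradial x y hxy]
  have hGrad : ∀ x y : EuclideanSpace ℝ (Fin d), ‖x‖ = ‖y‖ → G x = G y := by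
    rw [hGv]; exact fourier_radial v hvrad
  have hFrad : ∀ x y : EuclideanSpace ℝ (Fin d), ‖x‖ = ‖y‖ → F x = F y := by
    intro x y hxy
    rw [key, key, hxy, hGrad x y hxy]
  set M : ℝ := SchwartzMap.seminorm ℝ 0 0 (fourierTransformCLM ℝ v) with hM_def
  have hM0 : 0 ≤ M := apply_nonneg _ _
  have hGM : ∀ ξ : EuclideanSpace ℝ (Fin d), ‖G ξ‖ ≤ M := by
    intro ξ
    rw [hGv]
    exact norm_le_seminorm ℝ (fourierTransformCLM ℝ v) ξ
  have hFcont : Continuous F := by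
    rw [hF_def]
    exact (fourierTransformCLM ℝ w).continuous
  have hFsupp : ∀ ξ : EuclideanSpace ℝ (Fin d), 1 ≤ ‖ξ‖ → F ξ = 0 := by
    intro ξ hξ
    rw [key]
    rw [hG_def] at hsupp ⊢
    rw [hsupp ξ hξ, smul_zero]
  have hFnorm : ∀ ξ : EuclideanSpace ℝ (Fin d),
      ‖F ξ‖ = (4 * π ^ 2 * ‖ξ‖ ^ 2) ^ m * ‖G ξ‖ := by
    intro ξ
    rw [key, norm_smul, norm_pow, Complex.norm_real, Real.norm_eq_abs, abs_neg,
      _root_.abs_of_nonneg (by positivity : (0:ℝ) ≤ 4 * π ^ 2 * ‖ξ‖ ^ 2)]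
  -- the unit vector and the profile function
  set e₀ : EuclideanSpace ℝ (Fin d) := EuclideanSpace.single (⟨0, hd⟩ : Fin d) (1 : ℝ)
    with he₀_def
  have he₀ : ‖e₀‖ = 1 := by rw [he₀_def, EuclideanSpace.norm_single]; norm_num
  have hnorm_smul_e₀ : ∀ s : ℝ, ‖s • e₀‖ = |s| := by
    intro s
    rw [norm_smul, he₀, Real.norm_eq_abs, mul_one]
  set φ : ℝ → ℝ := fun s => ‖F (s • e₀)‖ ^ 2 / s with hφ_def
  have hφnonneg : ∀ s ∈ Set.Ioi (0 : ℝ), 0 ≤ φ s := fun s hs =>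
    div_nonneg (by positivity) (le_of_lt hs)
  have hφmeas : AEStronglyMeasurable φ volume :=
    (((hFcont.comp (continuous_id.smul continuous_const)).norm.pow 2).measurable.div
      measurable_id).aestronglyMeasurable
  set K : ℝ := ((4 * π ^ 2) ^ m * M) ^ 2 with hK_def
  have hφbound : ∀ s ∈ Set.Ioc (0 : ℝ) 1, φ s ≤ K := by
    intro s hs
    obtain ⟨hs0, hs1⟩ := hs
    have hFs : ‖F (s • e₀)‖ ≤ (4 * π ^ 2) ^ m * M * s := by
      have h1 : (s ^ 2) ^ m ≤ s := by
        rw [← pow_mul]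
        calc s ^ (2 * m) ≤ s ^ 1 := pow_le_pow_of_le_one hs0.le hs1 (by omega)
          _ = s := pow_one s
      calc ‖F (s • e₀)‖ = (4 * π ^ 2 * ‖s • e₀‖ ^ 2) ^ m * ‖G (s • e₀)‖ := hFnorm _
        _ = (4 * π ^ 2) ^ m * (s ^ 2) ^ m * ‖G (s • e₀)‖ := by
            rw [hnorm_smul_e₀, _root_.sq_abs, mul_pow]
        _ ≤ (4 * π ^ 2) ^ m * s * M := by
            have := mul_le_mul (mul_le_mul_of_nonneg_left h1 (by positivity :
              (0:ℝ) ≤ (4 * π ^ 2) ^ m)) (hGM (s • e₀)) (norm_nonneg _) (by positivity)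
            linarith [this]
        _ = (4 * π ^ 2) ^ m * M * s := by ring
    have hnn : (0:ℝ) ≤ (4 * π ^ 2) ^ m * M * s := by positivity
    calc φ s ≤ ((4 * π ^ 2) ^ m * M * s) ^ 2 / s := by
          exact (div_le_div_iff_of_pos_right hs0).mpr (pow_le_pow_left₀ (norm_nonneg _) hFs 2)
      _ = K * s := by field_simp [hK_def]; ring
      _ ≤ K * 1 := mul_le_mul_of_nonneg_left hs1 (by positivity)
      _ = K := mul_one K
  have hφzero : ∀ s ∈ Set.Ioi (1 : ℝ), φ s = 0 := by
    intro s hs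
    have : F (s • e₀) = 0 := by
      apply hFsupp
      rw [hnorm_smul_e₀, _root_.abs_of_pos (by linarith [Set.mem_Ioi.mp hs] : (0:ℝ) < s)]
      exact le_of_lt hs
    rw [hφ_def]
    simp [this]
  have hφint : IntegrableOn φ (Set.Ioi (0 : ℝ)) volume := by
    rw [← Set.Ioc_union_Ioi_eq_Ioi (zero_le_one : (0:ℝ) ≤ 1)]
    apply IntegrableOn.union
    · exact Measure.integrableOn_of_bounded (by simp) hφmeas
        ((ae_restrict_iff' measurableSet_Ioc).mpr (ae_of_all _ fun s hs => by
          rw [Real.norm_eq_abs, _root_.abs_of_nonneg (hφnonneg s hs.1)]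
          exact hφbound s hs))
    · exact (integrableOn_congr_fun hφzero measurableSet_Ioi).mpr integrableOn_zero
  set C : ℝ := ∫ s in Set.Ioi (0 : ℝ), φ s with hC_def
  have hC0 : 0 ≤ C := setIntegral_nonneg measurableSet_Ioi hφnonneg
  refine ⟨C, hC0, ?_, ?_⟩
  · intro ξ hξ
    have hnξ : 0 < ‖ξ‖ := norm_pos_iff.mpr hξ
    have hFh : 𝓕 (fun x => (((laplacian^[m] ⇑u) x : ℝ) : ℂ)) = F := by rw [hhc, hF_def]
    have heq : ∀ t ∈ Set.Ioi (0 : ℝ),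
        ‖𝓕 (fun x => (((laplacian^[m] ⇑u) x : ℝ) : ℂ)) (t • ξ)‖ ^ 2 / t
          = ‖ξ‖ * φ (‖ξ‖ * t) := by
      intro t ht
      rw [Set.mem_Ioi] at ht
      have hFt : F (t • ξ) = F ((‖ξ‖ * t) • e₀) := by
        apply hFrad
        rw [norm_smul, hnorm_smul_e₀, Real.norm_eq_abs, _root_.abs_of_pos ht,
          _root_.abs_of_pos (by positivity), mul_comm]
      rw [hFh, hFt, hφ_def]
      field_simp
    have hcomp : IntegrableOn (fun t => ‖ξ‖ * φ (‖ξ‖ * t)) (Set.Ioi (0 : ℝ)) volume := by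
      apply Integrable.const_mul
      have := (integrableOn_Ioi_comp_mul_left_iff φ 0 hnξ).mpr (by simpa using hφint)
      exact this
    constructor
    · exact (integrableOn_congr_fun heq measurableSet_Ioi).mpr hcomp
    · calc ∫ t in Set.Ioi (0:ℝ), ‖𝓕 (fun x => (((laplacian^[m] ⇑u) x : ℝ) : ℂ)) (t • ξ)‖ ^ 2 / t
          = ∫ t in Set.Ioi (0:ℝ), ‖ξ‖ * φ (‖ξ‖ * t) :=
            setIntegral_congr_fun measurableSet_Ioi heq
        _ = ‖ξ‖ * ∫ t in Set.Ioi (0:ℝ), φ (‖ξ‖ * t) := integral_const_mul _ _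
        _ = ‖ξ‖ * (‖ξ‖⁻¹ • ∫ s in Set.Ioi (‖ξ‖ * 0), φ s) := by
            rw [integral_comp_mul_left_Ioi φ 0 hnξ]
        _ = C := by
            rw [mul_zero, smul_eq_mul, hC_def, ← mul_assoc,
              mul_inv_cancel₀ (ne_of_gt hnξ), one_mul]
  · rintro ⟨ξ₀, hξ₀, hGξ₀⟩
    have hr₀ : 0 < ‖ξ₀‖ := norm_pos_iff.mpr hξ₀
    set r₀ : ℝ := ‖ξ₀‖ with hr₀_def
    have hGr : G (r₀ • e₀) ≠ 0 := by
      have : G (r₀ • e₀) = G ξ₀ := by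
        apply hGrad
        rw [hnorm_smul_e₀, _root_.abs_of_pos hr₀]
      rw [this]; exact hGξ₀
    have hFr : F (r₀ • e₀) ≠ 0 := by
      rw [key]
      apply smul_ne_zero ?_ hGr
      apply pow_ne_zero
      simp only [ne_eq, Complex.ofReal_eq_zero]
      have : (0:ℝ) < 4 * π ^ 2 * ‖r₀ • e₀‖ ^ 2 := by
        rw [hnorm_smul_e₀, _root_.abs_of_pos hr₀]
        positivity
      intro hcontra
      rw [neg_eq_zero] at hcontra
      exact this.ne' hcontra
    have hφr₀ : 0 < φ r₀ := div_pos (pow_pos (norm_pos_iff.mpr hFr) 2) hr₀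
    have hφcont : ContinuousAt φ r₀ := by
      apply ContinuousAt.div
      · exact ((hFcont.comp (continuous_id.smul continuous_const)).norm.pow 2).continuousAt
      · exact continuousAt_id
      · exact ne_of_gt hr₀
    have hnhds : φ ⁻¹' Set.Ioi 0 ∈ nhds r₀ := hφcont (Ioi_mem_nhds hφr₀)
    obtain ⟨δ, hδ0, hball⟩ := Metric.mem_nhds_iff.mp hnhds
    set ε : ℝ := min δ r₀ with hε_def
    have hε0 : 0 < ε := lt_min hδ0 hr₀
    have hsub : Set.Ioo (r₀ - ε) r₀ ⊆ Function.support φ ∩ Set.Ioi 0 := by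
      intro s hs
      obtain ⟨hs1, hs2⟩ := hs
      have hsball : s ∈ Metric.ball r₀ δ := by
        rw [Metric.mem_ball, Real.dist_eq, abs_sub_lt_iff]
        constructor
        · linarith
        · have : ε ≤ δ := min_le_left _ _
          linarith
      have hφs : 0 < φ s := hball hsball
      refine ⟨ne_of_gt hφs, ?_⟩
      have : ε ≤ r₀ := min_le_right _ _
      exact Set.mem_Ioi.mpr (by linarith)
    have hmeas_pos : 0 < volume (Function.support φ ∩ Set.Ioi 0) := by
      calc (0 : ENNReal) < volume (Set.Ioo (r₀ - ε) r₀) := by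
            rw [Real.volume_Ioo]
            simp only [ENNReal.ofReal_pos]
            linarith
        _ ≤ volume (Function.support φ ∩ Set.Ioi 0) := measure_mono hsub
    rw [hC_def]
    rw [setIntegral_pos_iff_support_of_nonneg_ae
      ((ae_restrict_iff' measurableSet_Ioi).mpr (ae_of_all _ hφnonneg)) hφint]
    exact hmeas_pos
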